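/- Let g̃ : O⁺ → ℝ^{d×d} be a Lipschitz field of symmetric positive definite matrices on O⁺ = {(x', x_d) : |x'| < δ, 0 < x_d < ε}, satisfying g̃_{jd}(x', 0) = g̃_{dj}(x', 0) = 0 for all 1 ≤ j ≤ d-1. Define h on O = {(x', x_d) : |x'| < δ, -ε < x_d < ε} by h_{jk}(x', x_d) = g̃_{jk}(x', |x_d|) if 1 ≤ j, k ≤ d-1 or j = k = d, and h_{jd}(x', x_d) = h_{dj}(x', x_d) = sign(x_d) · g̃_{jd}(x', |x_d|) for 1 ≤ j ≤ d-1. Then h is Lipschitz on O. -/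
import Mathlib


noncomputable section

private lemma lemG {E : Type*} [NormedAddCommGroup E] {δ ε : ℝ} (K : NNReal)
    {F : E × ℝ → ℝ}
    (hF : LipschitzOnWith K F {p | ‖p.1‖ < δ ∧ 0 ≤ p.2 ∧ p.2 < ε}) :
    ∀ u v : E × ℝ, u ∈ {p : E × ℝ | ‖p.1‖ < δ ∧ 0 ≤ p.2 ∧ p.2 < ε} →
      v ∈ {p : E × ℝ | ‖p.1‖ < δ ∧ 0 ≤ p.2 ∧ p.2 < ε} →
      |F u - F v| ≤ K * dist u.1 v.1 + K * |u.2 - v.2| := by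
  intro u v hu hv
  have h := hF.dist_le_mul u hu v hv
  rw [Real.dist_eq, Prod.dist_eq, Real.dist_eq] at h
  refine h.trans ?_
  have hmax : max (dist u.1 v.1) |u.2 - v.2| ≤ dist u.1 v.1 + |u.2 - v.2| :=
    max_le (le_add_of_nonneg_right (abs_nonneg _)) (le_add_of_nonneg_left dist_nonneg)
  calc (K : ℝ) * max (dist u.1 v.1) |u.2 - v.2|
      ≤ K * (dist u.1 v.1 + |u.2 - v.2|) :=
        mul_le_mul_of_nonneg_left hmax K.coe_nonneg
    _ = K * dist u.1 v.1 + K * |u.2 - v.2| := by ring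

private lemma lemM {E : Type*} [NormedAddCommGroup E] {δ ε : ℝ} (hε : 0 < ε) (K : NNReal)
    {F : E × ℝ → ℝ}
    (hF : LipschitzOnWith K F {p | ‖p.1‖ < δ ∧ 0 ≤ p.2 ∧ p.2 < ε})
    (h0 : ∀ x : E, ‖x‖ < δ → F (x, 0) = 0)
    (p q : E × ℝ) (hp1 : ‖p.1‖ < δ) (hp2 : |p.2| < ε)
    (hq1 : ‖q.1‖ < δ) (hq2 : |q.2| < ε) :
    |Real.sign p.2 * F (p.1, |p.2|) - Real.sign q.2 * F (q.1, |q.2|)|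
      ≤ K * dist p.1 q.1 + K * |p.2 - q.2| := by
  have signF : ∀ (x : E) (t : ℝ), ‖x‖ < δ → 0 ≤ t →
      Real.sign t * F (x, |t|) = F (x, t) := by
    intro x t hx ht
    rcases ht.eq_or_lt with h | h
    · simp [← h, Real.sign_zero, h0 x hx]
    · rw [Real.sign_of_pos h, abs_of_pos h, one_mul]
  have signFneg : ∀ (x : E) (t : ℝ), t < 0 → Real.sign t * F (x, |t|) = -F (x, -t) := by
    intro x t ht
    rw [Real.sign_of_neg ht, abs_of_neg ht, neg_one_mul]
  have hKd : (0 : ℝ) ≤ K * dist p.1 q.1 := mul_nonneg K.coe_nonneg dist_nonneg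
  have hvan : ∀ (x : E) (t : ℝ), ‖x‖ < δ → 0 ≤ t → t < ε → |F (x, t)| ≤ K * t := by
    intro x t hx ht htε
    have := lemG K hF (x, t) (x, 0) ⟨hx, ht, htε⟩ ⟨hx, le_refl 0, hε⟩
    simpa [h0 x hx, abs_of_nonneg ht] using this
  rcases le_or_gt 0 p.2 with ha | ha <;> rcases le_or_gt 0 q.2 with hb | hb
  · rw [signF p.1 p.2 hp1 ha, signF q.1 q.2 hq1 hb]
    exact lemG K hF (p.1, p.2) (q.1, q.2) ⟨hp1, ha, lt_of_abs_lt hp2⟩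
      ⟨hq1, hb, lt_of_abs_lt hq2⟩
  · -- p.2 ≥ 0, q.2 < 0
    rw [signF p.1 p.2 hp1 ha, signFneg q.1 q.2 hb, sub_neg_eq_add]
    have h1 : |F (p.1, p.2)| ≤ K * p.2 := hvan p.1 p.2 hp1 ha (lt_of_abs_lt hp2)
    have h2 : |F (q.1, -q.2)| ≤ K * (-q.2) :=
      hvan q.1 (-q.2) hq1 (neg_nonneg.mpr hb.le) (neg_lt.mp (abs_lt.mp hq2).1)
    have habs : |p.2 - q.2| = p.2 - q.2 := abs_of_pos (by linarith)
    calc |F (p.1, p.2) + F (q.1, -q.2)| ≤ |F (p.1, p.2)| + |F (q.1, -q.2)| := abs_add_le _ _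
      _ ≤ K * p.2 + K * (-q.2) := add_le_add h1 h2
      _ = K * |p.2 - q.2| := by rw [habs]; ring
      _ ≤ K * dist p.1 q.1 + K * |p.2 - q.2| := le_add_of_nonneg_left hKd
  · -- p.2 < 0, q.2 ≥ 0
    rw [signF q.1 q.2 hq1 hb, signFneg p.1 p.2 ha]
    have h1 : |F (q.1, q.2)| ≤ K * q.2 := hvan q.1 q.2 hq1 hb (lt_of_abs_lt hq2)
    have h2 : |F (p.1, -p.2)| ≤ K * (-p.2) :=
      hvan p.1 (-p.2) hp1 (neg_nonneg.mpr ha.le) (neg_lt.mp (abs_lt.mp hp2).1)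
    have habs : |p.2 - q.2| = -(p.2 - q.2) := abs_of_neg (by linarith)
    calc |-F (p.1, -p.2) - F (q.1, q.2)|
        ≤ |F (p.1, -p.2)| + |F (q.1, q.2)| := by
          have habs2 := abs_add_le (-F (p.1, -p.2)) (-F (q.1, q.2))
          simpa [sub_eq_add_neg, abs_neg] using habs2
      _ ≤ K * (-p.2) + K * q.2 := add_le_add h2 h1
      _ = K * |p.2 - q.2| := by rw [habs]; ring
      _ ≤ K * dist p.1 q.1 + K * |p.2 - q.2| := le_add_of_nonneg_left hKd
  · -- both negative
    rw [signFneg p.1 p.2 ha, signFneg q.1 q.2 hb]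
    have := lemG K hF (q.1, -q.2) (p.1, -p.2)
      ⟨hq1, neg_nonneg.mpr hb.le, neg_lt.mp (abs_lt.mp hq2).1⟩
      ⟨hp1, neg_nonneg.mpr ha.le, neg_lt.mp (abs_lt.mp hp2).1⟩
    have heq : -F (p.1, -p.2) - -F (q.1, -q.2) = F (q.1, -q.2) - F (p.1, -p.2) := by ring
    rw [heq]
    have h2 : (-q.2 : ℝ) - -p.2 = p.2 - q.2 := by ring
    rw [h2, dist_comm] at this
    simpa using this

/-- The reflected extension h of a Lipschitz symmetric positive definite
matrix field g̃ (with vanishing mixed entries g̃_{jd}(x',0) = 0) is Lipschitz on the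
full strip. Points of ℝ^d are modelled as (x', x_d) ∈ ℝ^{d-1} × ℝ, matrix indices by
Fin (n+1) with last index the normal direction. -/
theorem reflected_metric_lipschitz (n : ℕ) (δ ε : ℝ) (hδ : 0 < δ) (hε : 0 < ε)
    (K : NNReal)
    (g h : EuclideanSpace ℝ (Fin n) × ℝ → Fin (n + 1) → Fin (n + 1) → ℝ)
    (hLip : ∀ j k, LipschitzOnWith K (fun p => g p j k)
      {p | ‖p.1‖ < δ ∧ 0 ≤ p.2 ∧ p.2 < ε})
    (hsymm : ∀ p ∈ {p : EuclideanSpace ℝ (Fin n) × ℝ | ‖p.1‖ < δ ∧ 0 ≤ p.2 ∧ p.2 < ε},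
      ∀ j k, g p j k = g p k j)
    (hpos : ∀ p ∈ {p : EuclideanSpace ℝ (Fin n) × ℝ | ‖p.1‖ < δ ∧ 0 ≤ p.2 ∧ p.2 < ε},
      ∀ ξ : Fin (n + 1) → ℝ, ξ ≠ 0 → 0 < ∑ j, ∑ k, g p j k * ξ j * ξ k)
    (hbd : ∀ x' : EuclideanSpace ℝ (Fin n), ‖x'‖ < δ →
      ∀ j : Fin (n + 1), j ≠ Fin.last n →
        g (x', 0) j (Fin.last n) = 0 ∧ g (x', 0) (Fin.last n) j = 0)
    (hh : ∀ p j k, h p j k =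
      if (j = Fin.last n ∧ k = Fin.last n) ∨ (j ≠ Fin.last n ∧ k ≠ Fin.last n)
      then g (p.1, |p.2|) j k
      else Real.sign p.2 * g (p.1, |p.2|) j k) :
    ∃ K' : NNReal, ∀ j k, LipschitzOnWith K' (fun p => h p j k)
      {p | ‖p.1‖ < δ ∧ |p.2| < ε} := by
  refine ⟨2 * K, fun j k => ?_⟩
  rw [lipschitzOnWith_iff_dist_le_mul]
  intro p hp q hq
  obtain ⟨hp1, hp2⟩ := hp
  obtain ⟨hq1, hq2⟩ := hq
  rw [Real.dist_eq]
  have hdx : dist p.1 q.1 ≤ dist p q := by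
    rw [Prod.dist_eq]; exact le_max_left _ _
  have hdt : |p.2 - q.2| ≤ dist p q := by
    rw [Prod.dist_eq, ← Real.dist_eq]; exact le_max_right _ _
  have hK2 : ((2 * K : NNReal) : ℝ) = 2 * (K : ℝ) := by push_cast; ring
  have hbound : ∀ r : ℝ, r ≤ K * dist p.1 q.1 + K * |p.2 - q.2| →
      r ≤ (2 * K : NNReal) * dist p q := by
    intro r hr
    rw [hK2]
    have h1 : (K : ℝ) * dist p.1 q.1 ≤ K * dist p q :=
      mul_le_mul_of_nonneg_left hdx K.coe_nonneg
    have h2 : (K : ℝ) * |p.2 - q.2| ≤ K * dist p q :=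
      mul_le_mul_of_nonneg_left hdt K.coe_nonneg
    nlinarith [hr]
  simp only [hh]
  by_cases hc : (j = Fin.last n ∧ k = Fin.last n) ∨ (j ≠ Fin.last n ∧ k ≠ Fin.last n)
  · rw [if_pos hc, if_pos hc]
    refine hbound _ ?_
    have hstep := lemG K (hLip j k) (p.1, |p.2|) (q.1, |q.2|)
      ⟨hp1, abs_nonneg _, hp2⟩ ⟨hq1, abs_nonneg _, hq2⟩
    dsimp only at hstep
    refine hstep.trans ?_
    have habs := abs_abs_sub_abs_le_abs_sub p.2 q.2
    have hK : (0 : ℝ) ≤ K := K.coe_nonneg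
    nlinarith
  · rw [if_neg hc, if_neg hc]
    push_neg at hc
    have h0 : ∀ x' : EuclideanSpace ℝ (Fin n), ‖x'‖ < δ → g (x', 0) j k = 0 := by
      intro x' hx'
      by_cases hj : j = Fin.last n
      · have hk : k ≠ Fin.last n := hc.1 hj
        subst hj; exact (hbd x' hx' k hk).2
      · have := hc.2 hj
        subst this
        exact (hbd x' hx' j hj).1
    exact hbound _ (lemM hε K (hLip j k) h0 p q hp1 hp2 hq1 hq2)
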